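/- Let q, d ≥ 2 be integers. For every natural number A and every s = (θ_u, θ_w, θ_2, θ_1, θ_0) ∈ ℤ^5, γ(qA, q, d; s) = Σ_{λ=0}^{q−1} γ(A, q, d; q·θ_u, (λ+1−q)·θ_u + θ_w, q·θ_u + q²·θ_2, (λ+1−q)·θ_u + θ_w + (λq − q(q−1)/2)·θ_2 + q·θ_1, (λ(λ+1)/2)·θ_2 + λ·θ_1 + θ_0). -/

import Mathlib

/-- `vq q n` is the `q`-adic valuation: `0` if `n = 0`, and otherwise the
largest `k` such that `q ^ k` divides `n`. -/
noncomputable def vq (q n : ℕ) : ℕ := if n = 0 then 0 else sSup {k : ℕ | q ^ k ∣ n}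

/-- `wq q n = ∑_{i=0}^n vq q i`. -/
noncomputable def wq (q n : ℕ) : ℕ := ∑ i ∈ Finset.range (n + 1), vq q i

/-- `uq q n = ∑_{i=0}^n wq q i`. -/
noncomputable def uq (q n : ℕ) : ℕ := ∑ i ∈ Finset.range (n + 1), wq q i

/-- `gamma q d tu tw t2 t1 t0 A` is the number of `n < A` with
`tu·u_q(n) + tw·w_q(n) + t2·n(n+1)/2 + t1·n + t0 ≡ 0 (mod d)`. -/
noncomputable def gamma (q d : ℕ) (tu tw t2 t1 t0 : ℤ) (A : ℕ) : ℕ :=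
  ((Finset.range A).filter fun n =>
    (tu * uq q n + tw * wq q n + t2 * (n * (n + 1) / 2 : ℕ) + t1 * n + t0) % (d : ℤ) = 0).card

lemma vq_zero (q : ℕ) : vq q 0 = 0 := by simp [vq]

lemma vq_spec (q n : ℕ) (hq : 2 ≤ q) (hn : n ≠ 0) :
    q ^ (vq q n) ∣ n ∧ ¬ q ^ (vq q n + 1) ∣ n := by
  have hbdd : BddAbove {k : ℕ | q ^ k ∣ n} := by
    refine ⟨n, fun k hk => ?_⟩
    have h1 : q ^ k ≤ n := Nat.le_of_dvd (Nat.pos_of_ne_zero hn) hk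
    have h2 : k < 2 ^ k := Nat.lt_two_pow_self
    have h3 : 2 ^ k ≤ q ^ k := Nat.pow_le_pow_left hq k
    omega
  have hne : {k : ℕ | q ^ k ∣ n}.Nonempty := ⟨0, by simp⟩
  have hmem := Nat.sSup_mem hne hbdd
  have hv : vq q n = sSup {k : ℕ | q ^ k ∣ n} := by simp [vq, hn]
  constructor
  · rw [hv]; exact hmem
  · intro hdvd
    have := le_csSup hbdd (show vq q n + 1 ∈ {k : ℕ | q ^ k ∣ n} from hdvd)
    rw [← hv] at this
    omega

lemma vq_eq (q n k : ℕ) (hq : 2 ≤ q) (hn : n ≠ 0) (h1 : q ^ k ∣ n)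
    (h2 : ¬ q ^ (k + 1) ∣ n) : vq q n = k := by
  obtain ⟨hd1, hd2⟩ := vq_spec q n hq hn
  by_contra hne
  rcases Nat.lt_or_ge (vq q n) k with h | h
  · exact hd2 (dvd_trans (pow_dvd_pow q (by omega)) h1)
  · exact h2 (dvd_trans (pow_dvd_pow q (by omega)) hd1)

lemma vq_not_dvd (q r : ℕ) (hq : 2 ≤ q) (hr : 0 < r) (h : ¬ q ∣ r) : vq q r = 0 :=
  vq_eq q r 0 hq (by omega) (by simp) (by simpa using h)

lemma vq_mul (q j : ℕ) (hq : 2 ≤ q) (hj : j ≠ 0) : vq q (q * j) = vq q j + 1 := by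
  obtain ⟨hd1, hd2⟩ := vq_spec q j hq hj
  refine vq_eq q (q * j) (vq q j + 1) hq (by positivity) ?_ ?_
  · rw [pow_succ, mul_comm]; exact mul_dvd_mul_left q hd1
  · intro hdvd
    apply hd2
    have h : q * q ^ (vq q j + 1) ∣ q * j := by
      rw [show q * q ^ (vq q j + 1) = q ^ (vq q j + 1 + 1) by ring]; exact hdvd
    exact (mul_dvd_mul_iff_left (show q ≠ 0 by omega)).mp h

lemma wq_succ (q n : ℕ) : wq q (n + 1) = wq q n + vq q (n + 1) :=
  Finset.sum_range_succ _ _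

lemma wq_zero (q : ℕ) : wq q 0 = 0 := by simp [wq, vq_zero]

lemma not_dvd_mid (q m l : ℕ) (hq : 2 ≤ q) (hl : l + 1 < q) : ¬ q ∣ (q * m + l + 1) := by
  intro hdvd
  have h1 : q ∣ l + 1 := by
    have h : q * m + l + 1 = q * m + (l + 1) := by omega
    rw [h] at hdvd
    exact (Nat.dvd_add_right ⟨m, rfl⟩).mp hdvd
  have := Nat.le_of_dvd (by omega) h1
  omega

lemma wq_stable (q m : ℕ) (hq : 2 ≤ q) : ∀ lam, lam < q → wq q (q * m + lam) = wq q (q * m) := by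
  intro lam
  induction lam with
  | zero => simp
  | succ l ih =>
    intro hl
    have h0 : vq q (q * m + l + 1) = 0 :=
      vq_not_dvd q _ hq (by omega) (not_dvd_mid q m l hq hl)
    have h : wq q (q * m + l + 1) = wq q (q * m + l) + vq q (q * m + l + 1) := wq_succ q _
    rw [show q * m + (l + 1) = q * m + l + 1 by omega, h, h0, ih (by omega), add_zero]

lemma wq_mul (q : ℕ) (hq : 2 ≤ q) : ∀ m, wq q (q * m) = m + wq q m := by
  intro m
  induction m with
  | zero => simp
  | succ m ih =>
    have hqm : q * (m + 1) = q * m + q := Nat.mul_succ q m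
    have h1 : q * (m + 1) = (q * m + (q - 1)) + 1 := by omega
    have harg : q * m + (q - 1) + 1 = q * (m + 1) := by omega
    rw [h1, wq_succ, harg, wq_stable q m hq (q - 1) (by omega), ih,
      vq_mul q (m + 1) hq (by omega), wq_succ]
    omega

lemma wq_mul_add (q m lam : ℕ) (hq : 2 ≤ q) (hl : lam < q) :
    wq q (q * m + lam) = m + wq q m := by
  rw [wq_stable q m hq lam hl, wq_mul q hq m]

lemma sum_wq_blocks (q : ℕ) (hq : 2 ≤ q) : ∀ m,
    ∑ i ∈ Finset.range (q * m), wq q i = q * ∑ j ∈ Finset.range m, (j + wq q j) := by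
  intro m
  induction m with
  | zero => simp
  | succ m ih =>
    rw [show q * (m + 1) = q * m + q by ring, Finset.sum_range_add, ih,
      Finset.sum_range_succ]
    have h : ∀ r ∈ Finset.range q, wq q (q * m + r) = m + wq q m := fun r hr =>
      wq_mul_add q m r hq (Finset.mem_range.mp hr)
    rw [Finset.sum_congr rfl h, Finset.sum_const, Finset.card_range, smul_eq_mul]
    ring

lemma uq_formula (q m lam : ℕ) (hq : 2 ≤ q) (hl : lam < q) :
    uq q (q * m + lam) =
      q * ∑ j ∈ Finset.range m, (j + wq q j) + (lam + 1) * (m + wq q m) := by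
  have h1 : uq q (q * m + lam) = ∑ i ∈ Finset.range (q * m + (lam + 1)), wq q i := by
    rw [uq]; rfl
  rw [h1, Finset.sum_range_add, sum_wq_blocks q hq m]
  congr 1
  have h : ∀ r ∈ Finset.range (lam + 1), wq q (q * m + r) = m + wq q m := fun r hr =>
    wq_mul_add q m r hq (by have := Finset.mem_range.mp hr; omega)
  rw [Finset.sum_congr rfl h, Finset.sum_const, Finset.card_range, smul_eq_mul]

lemma tri_cast (n : ℕ) : 2 * ((n * (n + 1) / 2 : ℕ) : ℤ) = (n : ℤ) * ((n : ℤ) + 1) := by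
  have h : 2 * (n * (n + 1) / 2) = n * (n + 1) :=
    Nat.mul_div_cancel' (even_iff_two_dvd.mp (Nat.even_mul_succ_self n))
  exact_mod_cast congrArg (Nat.cast : ℕ → ℤ) h

lemma half_cast (q : ℕ) (hq : 2 ≤ q) :
    2 * ((q * (q - 1) / 2 : ℕ) : ℤ) = (q : ℤ) * ((q : ℤ) - 1) := by
  have he : Even (q * (q - 1)) := by
    have := Nat.even_mul_succ_self (q - 1)
    have h : (q - 1) * ((q - 1) + 1) = q * (q - 1) := by
      have : q - 1 + 1 = q := by omega
      rw [this]; ring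
    rwa [h] at this
  have h : 2 * (q * (q - 1) / 2) = q * (q - 1) :=
    Nat.mul_div_cancel' (even_iff_two_dvd.mp he)
  have h' : (2 : ℤ) * ((q * (q - 1) / 2 : ℕ) : ℤ) = ((q * (q - 1) : ℕ) : ℤ) := by
    exact_mod_cast congrArg (Nat.cast : ℕ → ℤ) h
  rw [h', Nat.cast_mul, Nat.cast_sub (by omega : 1 ≤ q), Nat.cast_one]

lemma cond_eq (q : ℕ) (hq : 2 ≤ q) (tu tw t2 t1 t0 : ℤ) (m lam : ℕ) (hl : lam < q) :
    tu * uq q (q * m + lam) + tw * wq q (q * m + lam)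
      + t2 * (((q * m + lam) * ((q * m + lam) + 1) / 2 : ℕ) : ℤ)
      + t1 * ((q * m + lam : ℕ) : ℤ) + t0
    = ((q : ℤ) * tu) * uq q m + (((lam : ℤ) + 1 - q) * tu + tw) * wq q m
      + ((q : ℤ) * tu + (q : ℤ) ^ 2 * t2) * ((m * (m + 1) / 2 : ℕ) : ℤ)
      + (((lam : ℤ) + 1 - q) * tu + tw + ((lam : ℤ) * q - (q * (q - 1) / 2 : ℕ)) * t2
          + (q : ℤ) * t1) * m
      + (((lam * (lam + 1) / 2 : ℕ) : ℤ) * t2 + (lam : ℤ) * t1 + t0) := by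
  have hW : (wq q (q * m + lam) : ℤ) = (m : ℤ) + wq q m := by
    exact_mod_cast congrArg (Nat.cast : ℕ → ℤ) (wq_mul_add q m lam hq hl)
  have hUn := congrArg (Nat.cast : ℕ → ℤ) (uq_formula q m lam hq hl)
  push_cast at hUn
  have hS : ((∑ j ∈ Finset.range m, (j + wq q j) : ℕ) : ℤ)
      = (∑ j ∈ Finset.range m, ((j : ℤ) + wq q j)) := by push_cast; rfl
  have hSw : (∑ j ∈ Finset.range m, ((j : ℤ) + (wq q j : ℤ)))
      = (∑ j ∈ Finset.range m, (j : ℤ)) + ∑ j ∈ Finset.range m, (wq q j : ℤ) :=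
    Finset.sum_add_distrib
  have hsum_id : 2 * (∑ j ∈ Finset.range m, (j : ℤ)) + 2 * m = (m : ℤ) * (m + 1) := by
    have h := Finset.sum_range_id_mul_two (m + 1)
    have h2 : (∑ j ∈ Finset.range (m + 1), j) = (∑ j ∈ Finset.range m, j) + m :=
      Finset.sum_range_succ _ _
    rw [h2] at h
    have := congrArg (Nat.cast : ℕ → ℤ) h
    push_cast at this
    linarith
  have hsum_w : (∑ j ∈ Finset.range m, (wq q j : ℤ)) = (uq q m : ℤ) - wq q m := by
    have h : uq q m = (∑ j ∈ Finset.range m, wq q j) + wq q m := Finset.sum_range_succ _ _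
    have := congrArg (Nat.cast : ℕ → ℤ) h
    push_cast at this
    linarith
  have h2X := tri_cast (q * m + lam)
  have h2Y := tri_cast m
  have h2Z := tri_cast lam
  have h2C := half_cast q hq
  have hn : ((q * m + lam : ℕ) : ℤ) = (q : ℤ) * m + lam := by push_cast; ring
  rw [hn] at h2X
  rw [hW, hUn, hSw, hsum_w, hn]
  have key : 2 * (tu * ((q : ℤ) * ((∑ j ∈ Finset.range m, (j : ℤ)) + ((uq q m : ℤ) - wq q m))
        + ((lam : ℤ) + 1) * ((m : ℤ) + wq q m))
      + tw * ((m : ℤ) + wq q m)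
      + t2 * (((q * m + lam) * ((q * m + lam) + 1) / 2 : ℕ) : ℤ)
      + t1 * (((q : ℤ) * m + lam)) + t0)
    = 2 * (((q : ℤ) * tu) * uq q m + (((lam : ℤ) + 1 - q) * tu + tw) * wq q m
      + ((q : ℤ) * tu + (q : ℤ) ^ 2 * t2) * ((m * (m + 1) / 2 : ℕ) : ℤ)
      + (((lam : ℤ) + 1 - q) * tu + tw + ((lam : ℤ) * q - (q * (q - 1) / 2 : ℕ)) * t2
          + (q : ℤ) * t1) * m
      + (((lam * (lam + 1) / 2 : ℕ) : ℤ) * t2 + (lam : ℤ) * t1 + t0)) := by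
    linear_combination (tu * q) * hsum_id - (tu * q) * h2Y + t2 * h2X
      - ((q : ℤ) ^ 2 * t2) * h2Y + ((m : ℤ) * t2) * h2C - t2 * h2Z
  linarith [key]

theorem stmt_3 (q d : ℕ) (hq : 2 ≤ q) (hd : 2 ≤ d) (A : ℕ) (tu tw t2 t1 t0 : ℤ) :
    gamma q d tu tw t2 t1 t0 (q * A) =
      ∑ lam ∈ Finset.range q,
        gamma q d
          ((q : ℤ) * tu)
          (((lam : ℤ) + 1 - q) * tu + tw)
          ((q : ℤ) * tu + (q : ℤ) ^ 2 * t2)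
          (((lam : ℤ) + 1 - q) * tu + tw + ((lam : ℤ) * q - (q * (q - 1) / 2 : ℕ)) * t2
            + (q : ℤ) * t1)
          ((lam * (lam + 1) / 2 : ℕ) * t2 + (lam : ℤ) * t1 + t0)
          A := by
  classical
  unfold gamma
  have hsplit : ∀ f : ℕ → ℕ, ∑ n ∈ Finset.range (q * A), f n
      = ∑ m ∈ Finset.range A, ∑ lam ∈ Finset.range q, f (q * m + lam) := by
    intro f
    induction A with
    | zero => simp
    | succ B ih =>
      rw [show q * (B + 1) = q * B + q by ring, Finset.sum_range_add, ih,
        Finset.sum_range_succ]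
  rw [Finset.card_filter, hsplit, Finset.sum_comm]
  refine Finset.sum_congr rfl fun lam hlam => ?_
  rw [Finset.card_filter]
  refine Finset.sum_congr rfl fun m hm => ?_
  have h := cond_eq q hq tu tw t2 t1 t0 m lam (Finset.mem_range.mp hlam)
  simp only [h]
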